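/- Let h be a positive integer and let φ(x_1,…,x_h) = c_1x_1 + ⋯ + c_hx_h be a linear form with integer coefficients satisfying condition N. Then for every sequence b_1, b_2, b_3, … of integers there exists a sequence a_1, a_2, a_3, … of pairwise distinct integers such that the set A = {a_k : k = 1, 2, 3, …} is a φ-Sidon set and |a_k − b_k| < k^(4h) holds for all positive integers k. -/

import Mathlib

/-- `A` is a Sidon set for the linear form `φ(x₁,…,x_h) = c₁x₁ + ⋯ + c_hx_h`
with integer coefficients `c`. -/
def IsSidon {h : ℕ} (c : Fin h → ℤ) (A : Set ℤ) : Prop :=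
  ∀ a a' : Fin h → ℤ, (∀ i, a i ∈ A) → (∀ i, a' i ∈ A) →
    (∑ i, c i * a i) = (∑ i, c i * a' i) → a = a'

/-- The linear form with coefficients `c` satisfies condition N: there do not exist
disjoint subsets `I₁, I₂` of `{1,…,h}`, not both empty, with equal subset sums. -/
def ConditionN {h : ℕ} (c : Fin h → ℤ) : Prop :=
  ¬ ∃ I₁ I₂ : Finset (Fin h), Disjoint I₁ I₂ ∧ (I₁.Nonempty ∨ I₂.Nonempty) ∧
      ∑ i ∈ I₁, c i = ∑ i ∈ I₂, c i

namespace SidonAux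

variable {h : ℕ} (c : Fin h → ℤ)

/-- Sidon property for a finset. -/
def SidonF (A : Finset ℤ) : Prop :=
  ∀ u v : Fin h → ℤ, (∀ i, u i ∈ A) → (∀ i, v i ∈ A) →
    (∑ i, c i * u i) = (∑ i, c i * v i) → u = v

def coef (S T : Finset (Fin h)) : ℤ := (∑ i ∈ S, c i) - ∑ i ∈ T, c i

def dval (x y : Fin h → ℤ) (S T : Finset (Fin h)) : ℤ :=
  (∑ i ∈ Tᶜ, c i * y i) - ∑ i ∈ Sᶜ, c i * x i

def solve (q : (Fin h → ℤ) × (Fin h → ℤ) × Finset (Fin h) × Finset (Fin h)) : ℤ :=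
  dval c q.1 q.2.1 q.2.2.1 q.2.2.2 / coef c q.2.2.1 q.2.2.2

def Q (A : Finset ℤ) :
    Finset ((Fin h → ℤ) × (Fin h → ℤ) × Finset (Fin h) × Finset (Fin h)) :=
  (Fintype.piFinset fun _ => A) ×ˢ (Fintype.piFinset fun _ => A) ×ˢ
    Finset.univ ×ˢ Finset.univ

def forb (A : Finset ℤ) : Finset ℤ := A ∪ (Q (h := h) A).image (solve c)

lemma card_Q (A : Finset ℤ) :
    (Q (h := h) A).card = A.card ^ h * A.card ^ h * 2 ^ h * 2 ^ h := by
  simp [Q, Fintype.card_piFinset, Finset.card_univ, Fintype.card_finset]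
  ring

lemma card_forb (A : Finset ℤ) :
    (forb c A).card ≤ A.card + A.card ^ h * A.card ^ h * 2 ^ h * 2 ^ h := by
  refine (Finset.card_union_le _ _).trans ?_
  have := (Finset.card_image_le (s := Q (h := h) A) (f := solve c))
  rw [card_Q] at this
  omega

/-- Helper for splitting a sum at a set on which the tuple is constant. -/
lemma split_sum (x : Fin h → ℤ) (P : Finset (Fin h)) (t : ℤ)
    (hx : ∀ i ∈ P, x i = t) :
    ∑ i, c i * x i = (∑ i ∈ P, c i) * t + ∑ i ∈ Pᶜ, c i * x i := by
  rw [← Finset.sum_add_sum_compl P (fun i => c i * x i), Finset.sum_mul]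
  congr 1
  exact Finset.sum_congr rfl fun i hi => by rw [hx i hi]

lemma sidon_insert (hN : ConditionN c) {A : Finset ℤ} (hA : SidonF c A)
    {r : ℤ} (hr : r ∉ forb c A) : SidonF c (insert r A) := by
  classical
  intro u v hu hv hsum
  set S : Finset (Fin h) := Finset.univ.filter (fun i => u i = r) with hSdef
  set T : Finset (Fin h) := Finset.univ.filter (fun i => v i = r) with hTdef
  have hmemS : ∀ i, i ∈ S ↔ u i = r := fun i => by simp [hSdef]
  have hmemT : ∀ i, i ∈ T ↔ v i = r := fun i => by simp [hTdef]
  have huA : ∀ i, i ∉ S → u i ∈ A := by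
    intro i hi
    rcases Finset.mem_insert.mp (hu i) with h1 | h1
    · exact absurd ((hmemS i).mpr h1) hi
    · exact h1
  have hvA : ∀ i, i ∉ T → v i ∈ A := by
    intro i hi
    rcases Finset.mem_insert.mp (hv i) with h1 | h1
    · exact absurd ((hmemT i).mpr h1) hi
    · exact h1
  have hsplitu : ∑ i, c i * u i = (∑ i ∈ S, c i) * r + ∑ i ∈ Sᶜ, c i * u i :=
    split_sum c u S r (fun i hi => (hmemS i).mp hi)
  have hsplitv : ∑ i, c i * v i = (∑ i ∈ T, c i) * r + ∑ i ∈ Tᶜ, c i * v i :=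
    split_sum c v T r (fun i hi => (hmemT i).mp hi)
  have hsum' : (∑ i ∈ S, c i) * r + ∑ i ∈ Sᶜ, c i * u i
      = (∑ i ∈ T, c i) * r + ∑ i ∈ Tᶜ, c i * v i := by
    rw [← hsplitu, ← hsplitv]; exact hsum
  have hkey : coef c S T * r = dval c u v S T := by
    rw [coef, dval]; linear_combination hsum'
  have hcoef : coef c S T = 0 := by
    by_contra hne
    have hAne : A.Nonempty := by
      by_contra hAe
      rw [Finset.not_nonempty_iff_eq_empty] at hAe
      have hSu : S = Finset.univ := by
        refine Finset.eq_univ_iff_forall.mpr fun i => ?_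
        by_contra hi
        have := huA i hi
        simp [hAe] at this
      have hTu : T = Finset.univ := by
        refine Finset.eq_univ_iff_forall.mpr fun i => ?_
        by_contra hi
        have := hvA i hi
        simp [hAe] at this
      exact hne (by rw [coef, hSu, hTu, sub_self])
    obtain ⟨w, hw⟩ := hAne
    set u' : Fin h → ℤ := fun i => if u i = r then w else u i with hu'def
    set v' : Fin h → ℤ := fun i => if v i = r then w else v i with hv'def
    have hq : (u', v', S, T) ∈ Q (h := h) A := by
      simp only [Q, Finset.mem_product, Fintype.mem_piFinset, Finset.mem_univ,
        and_true]
      constructor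
      · intro i
        by_cases hi : u i = r
        · simp [hu'def, hi, hw]
        · simpa [hu'def, hi] using huA i (fun hmem => hi ((hmemS i).mp hmem))
      · intro i
        by_cases hi : v i = r
        · simp [hv'def, hi, hw]
        · simpa [hv'def, hi] using hvA i (fun hmem => hi ((hmemT i).mp hmem))
    have hd : dval c u' v' S T = dval c u v S T := by
      rw [dval, dval]
      congr 1
      · refine Finset.sum_congr rfl fun i hi => ?_
        have : v i ≠ r := fun hri => (Finset.mem_compl.mp hi) ((hmemT i).mpr hri)
        simp [hv'def, this]
      · refine Finset.sum_congr rfl fun i hi => ?_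
        have : u i ≠ r := fun hri => (Finset.mem_compl.mp hi) ((hmemS i).mpr hri)
        simp [hu'def, this]
    have hsolve : solve c (u', v', S, T) = r := by
      show dval c u' v' S T / coef c S T = r
      rw [hd, ← hkey, Int.mul_ediv_cancel_left _ hne]
    exact hr (Finset.mem_union_right _ (Finset.mem_image.mpr ⟨_, hq, hsolve⟩))
  have hST : S = T := by
    by_contra hne
    apply hN
    refine ⟨S \ T, T \ S, disjoint_sdiff_sdiff, ?_, ?_⟩
    · by_contra hcon
      push_neg at hcon
      obtain ⟨h1, h2⟩ := hcon
      rw [Finset.sdiff_eq_empty_iff_subset] at h1 h2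
      exact hne (le_antisymm h1 h2)
    · have e1 : ∑ i ∈ S \ T, c i = (∑ i ∈ S, c i) - ∑ i ∈ S ∩ T, c i := by
        rw [← Finset.sum_sdiff_eq_sub (Finset.inter_subset_left),
          Finset.sdiff_inter_self_left]
      have e2 : ∑ i ∈ T \ S, c i = (∑ i ∈ T, c i) - ∑ i ∈ S ∩ T, c i := by
        rw [← Finset.sum_sdiff_eq_sub (Finset.inter_subset_right),
          Finset.sdiff_inter_self_right]
      have := hcoef
      rw [coef, sub_eq_zero] at this
      rw [e1, e2, this]
  by_cases hSu : S = Finset.univ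
  · funext i
    have h1 : u i = r := (hmemS i).mp (hSu ▸ Finset.mem_univ i)
    have h2 : v i = r := (hmemT i).mp ((hST ▸ hSu : T = Finset.univ) ▸ Finset.mem_univ i)
    rw [h1, h2]
  · obtain ⟨i₀, hi₀⟩ : ∃ i, i ∉ S := by
      by_contra hcon
      push_neg at hcon
      exact hSu (Finset.eq_univ_iff_forall.mpr hcon)
    have hw : u i₀ ∈ A := huA i₀ hi₀
    set w := u i₀ with hwdef
    set u' : Fin h → ℤ := fun i => if u i = r then w else u i with hu'def
    set v' : Fin h → ℤ := fun i => if v i = r then w else v i with hv'def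
    have hu'A : ∀ i, u' i ∈ A := by
      intro i
      by_cases hi : u i = r
      · simp [hu'def, hi, hw]
      · simpa [hu'def, hi] using huA i (fun hmem => hi ((hmemS i).mp hmem))
    have hv'A : ∀ i, v' i ∈ A := by
      intro i
      by_cases hi : v i = r
      · simp [hv'def, hi, hw]
      · simpa [hv'def, hi] using hvA i (fun hmem => hi ((hmemT i).mp hmem))
    have e1 : ∑ i, c i * u' i = (∑ i ∈ S, c i) * w + ∑ i ∈ Sᶜ, c i * u i := by
      rw [split_sum c u' S w (fun i hi => by simp [hu'def, (hmemS i).mp hi])]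
      congr 1
      refine Finset.sum_congr rfl fun i hi => ?_
      have : u i ≠ r := fun hri => (Finset.mem_compl.mp hi) ((hmemS i).mpr hri)
      simp [hu'def, this]
    have e2 : ∑ i, c i * v' i = (∑ i ∈ T, c i) * w + ∑ i ∈ Tᶜ, c i * v i := by
      rw [split_sum c v' T w (fun i hi => by simp [hv'def, (hmemT i).mp hi])]
      congr 1
      refine Finset.sum_congr rfl fun i hi => ?_
      have : v i ≠ r := fun hri => (Finset.mem_compl.mp hi) ((hmemT i).mpr hri)
      simp [hv'def, this]
    have hsum'' : ∑ i, c i * u' i = ∑ i, c i * v' i := by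
      rw [e1, e2, ← hST]
      have : ∑ i ∈ Sᶜ, c i * u i = ∑ i ∈ Sᶜ, c i * v i := by
        rw [← hST] at hsum'
        linarith
      rw [this]
    have heq := hA u' v' hu'A hv'A hsum''
    funext i
    by_cases hi : u i = r
    · have : v i = r := (hmemT i).mp (hST ▸ (hmemS i).mpr hi)
      rw [hi, this]
    · have hvi : v i ≠ r := fun hri => hi ((hmemS i).mp (hST ▸ (hmemT i).mpr hri))
      have := congrFun heq i
      simpa [hu'def, hv'def, hi, hvi] using this

variable (b : ℕ → ℤ)

noncomputable def pick (k : ℕ) (A : Finset ℤ) : ℤ :=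
  if H : ((Finset.Icc (b k - ((k : ℤ) + 1) ^ (4 * h) + 1)
      (b k + ((k : ℤ) + 1) ^ (4 * h) - 1)) \ forb c A).Nonempty
  then H.choose else 0

noncomputable def gl : ℕ → List ℤ
  | 0 => []
  | (k + 1) => gl k ++ [pick c b k (gl k).toFinset]

noncomputable def aseq (k : ℕ) : ℤ := pick c b k (gl c b k).toFinset

lemma arith (hh : 0 < h) (k : ℕ) :
    k + (k ^ h * k ^ h * 2 ^ h * 2 ^ h + 2) ≤ 2 * (k + 1) ^ (4 * h) := by
  have h1 : k ^ h * k ^ h * 2 ^ h * 2 ^ h = (k * k * 2 * 2) ^ h := by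
    rw [mul_pow, mul_pow, mul_pow]
  have h2 : (k * k * 2 * 2) ^ h ≤ ((k + 1) ^ 4) ^ h :=
    Nat.pow_le_pow_left (by nlinarith) h
  have h3 : ((k + 1) ^ 4) ^ h = (k + 1) ^ (4 * h) := by rw [← pow_mul]
  rcases Nat.eq_zero_or_pos k with rfl | hk
  · simp [zero_pow hh.ne']
  · have h4 : k + 2 ≤ (k + 1) ^ (4 * h) := by
      calc k + 2 ≤ (k + 1) ^ 2 := by nlinarith
        _ ≤ (k + 1) ^ (4 * h) := Nat.pow_le_pow_right (by omega) (by omega)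
    omega

lemma allowed_nonempty (hh : 0 < h) (k : ℕ) (A : Finset ℤ) (hA : A.card ≤ k) :
    ((Finset.Icc (b k - ((k : ℤ) + 1) ^ (4 * h) + 1)
      (b k + ((k : ℤ) + 1) ^ (4 * h) - 1)) \ forb c A).Nonempty := by
  rw [← Finset.card_pos]
  set N : ℕ := (k + 1) ^ (4 * h) with hN
  have hcast : ((k : ℤ) + 1) ^ (4 * h) = (N : ℤ) := by push_cast [hN]; ring
  have hN1 : 1 ≤ N := Nat.one_le_pow _ _ (by omega)
  have hIcc : (Finset.Icc (b k - ((k : ℤ) + 1) ^ (4 * h) + 1)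
      (b k + ((k : ℤ) + 1) ^ (4 * h) - 1)).card = 2 * N - 1 := by
    rw [Int.card_Icc, hcast]
    have : b k + (N : ℤ) - 1 + 1 - (b k - (N : ℤ) + 1) = 2 * (N : ℤ) - 1 := by ring
    rw [this]
    omega
  have hforb : (forb c A).card ≤ k + k ^ h * k ^ h * 2 ^ h * 2 ^ h := by
    refine (card_forb c A).trans ?_
    gcongr
  have harith := arith hh k
  have hle := Finset.le_card_sdiff (forb c A)
    (Finset.Icc (b k - ((k : ℤ) + 1) ^ (4 * h) + 1)
      (b k + ((k : ℤ) + 1) ^ (4 * h) - 1))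
  omega

lemma aseq_spec (hh : 0 < h) (k : ℕ) :
    aseq c b k ∈ (Finset.Icc (b k - ((k : ℤ) + 1) ^ (4 * h) + 1)
      (b k + ((k : ℤ) + 1) ^ (4 * h) - 1)) \ forb c (gl c b k).toFinset := by
  have hcard : (gl c b k).toFinset.card ≤ k := by
    refine ((gl c b k).toFinset_card_le).trans ?_
    clear hh
    induction k with
    | zero => simp [gl]
    | succ k ih => simp [gl]; omega
  have H := allowed_nonempty c b hh k _ hcard
  rw [aseq, pick, dif_pos H]
  exact H.choose_spec

lemma gl_eq (k : ℕ) : gl c b k = (List.range k).map (aseq c b) := by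
  induction k with
  | zero => simp [gl]
  | succ k ih =>
    rw [gl, List.range_succ, List.map_append, ih]
    simp [aseq, ih]

lemma gl_toFinset_succ (k : ℕ) :
    (gl c b (k + 1)).toFinset = insert (aseq c b k) (gl c b k).toFinset := by
  show (gl c b k ++ [pick c b k (gl c b k).toFinset]).toFinset = _
  rw [List.toFinset_append]
  simp [aseq, Finset.union_comm, Finset.insert_eq, -Finset.union_singleton]

lemma sidonF_gl (hh : 0 < h) (hN : ConditionN c) (k : ℕ) :
    SidonF c (gl c b k).toFinset := by
  induction k with
  | zero =>
    intro u v hu _ _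
    have := hu ⟨0, hh⟩
    simp [gl] at this
  | succ k ih =>
    rw [gl_toFinset_succ]
    have hspec := aseq_spec c b hh k
    rw [Finset.mem_sdiff] at hspec
    exact sidon_insert c hN ih hspec.2

end SidonAux

/-- For every sequence `b` of integers there is a sequence `a` of pairwise distinct
integers forming a φ-Sidon set with `|a_k - b_k| < k^(4h)` for all `k ≥ 1`.
(Sequences are indexed by `ℕ` starting at `0`, so index `k : ℕ` represents the
`(k+1)`-st term.) -/
theorem statement0 {h : ℕ} (hh : 0 < h) (c : Fin h → ℤ) (hN : ConditionN c)
    (b : ℕ → ℤ) :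
    ∃ a : ℕ → ℤ, Function.Injective a ∧ IsSidon c (Set.range a) ∧
      ∀ k : ℕ, |a k - b k| < ((k : ℤ) + 1) ^ (4 * h) := by
  classical
  set a : ℕ → ℤ := SidonAux.aseq c b with ha
  have hmem : ∀ j k, j < k → a j ∈ (SidonAux.gl c b k).toFinset := by
    intro j k hjk
    rw [SidonAux.gl_eq]
    simp only [List.mem_toFinset, List.mem_map, List.mem_range]
    exact ⟨j, hjk, rfl⟩
  have hnotmem : ∀ k, a k ∉ (SidonAux.gl c b k).toFinset := by
    intro k hk
    have hspec := SidonAux.aseq_spec c b hh k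
    rw [Finset.mem_sdiff] at hspec
    exact hspec.2 (Finset.mem_union_left _ hk)
  have hne : ∀ j k, j < k → a j ≠ a k := by
    intro j k hjk heq
    exact hnotmem k (heq ▸ hmem j k hjk)
  refine ⟨a, ?_, ?_, ?_⟩
  · intro i j hij
    by_contra hne'
    rcases lt_trichotomy i j with hlt | heq | hlt
    · exact hne i j hlt hij
    · exact hne' heq
    · exact hne j i hlt hij.symm
  · intro u v hu hv hsum
    choose f hf using fun i => (hu i)
    choose g hg using fun i => (hv i)
    set N : ℕ := (Finset.univ.sup f ⊔ Finset.univ.sup g) + 1 with hNdef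
    have hfN : ∀ i, f i < N :=
      fun i => Nat.lt_succ_of_le
        (le_trans (Finset.le_sup (Finset.mem_univ i)) le_sup_left)
    have hgN : ∀ i, g i < N :=
      fun i => Nat.lt_succ_of_le
        (le_trans (Finset.le_sup (Finset.mem_univ i)) le_sup_right)
    exact SidonAux.sidonF_gl c b hh hN N u v
      (fun i => (hf i) ▸ hmem (f i) N (hfN i))
      (fun i => (hg i) ▸ hmem (g i) N (hgN i)) hsum
  · intro k
    have hspec := SidonAux.aseq_spec c b hh k
    rw [Finset.mem_sdiff, Finset.mem_Icc] at hspec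
    obtain ⟨⟨h1, h2⟩, _⟩ := hspec
    rw [ha, abs_lt]
    constructor <;> omega
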